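/- For r ≥ 1/2 there is a constant C = C(r) such that for all 2π-periodic f ∈ H^{r-1} and g ∈ H^{r+1}, ‖fg‖_{H^{r-1}} ≤ C ‖f‖_{H^{r-1}} ‖g‖_{H^{r+1}}. -/

import Mathlib

/-- Fourier-side H^r norm of a 2π-periodic function with Fourier coefficients c. -/
noncomputable def sobNorm (r : ℝ) (c : ℤ → ℂ) : ℝ :=
  Real.sqrt (∑' n : ℤ, (1 + (n : ℝ) ^ 2) ^ r * ‖c n‖ ^ 2)

/-- Membership in the periodic Sobolev space H^r, on the Fourier side. -/
def memSob (r : ℝ) (c : ℤ → ℂ) : Prop :=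
  Summable fun n : ℤ => (1 + (n : ℝ) ^ 2) ^ r * ‖c n‖ ^ 2

/-- Fourier coefficients of the product fg: convolution of the coefficients. -/
noncomputable def fconv (c d : ℤ → ℂ) (n : ℤ) : ℂ := ∑' k : ℤ, c k * d (n - k)

noncomputable def Wt (m : ℤ) : ℝ := 1 + (m : ℝ) ^ 2

lemma Wt_one_le (m : ℤ) : 1 ≤ Wt m := by unfold Wt; nlinarith [sq_nonneg ((m:ℝ))]
lemma Wt_pos (m : ℤ) : 0 < Wt m := lt_of_lt_of_le one_pos (Wt_one_le m)

lemma Wt_base (n k : ℤ) : Wt n ≤ 2 * Wt k * Wt (n - k) := by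
  unfold Wt
  have h : ((n - k : ℤ) : ℝ) = (n : ℝ) - k := by push_cast; ring
  rw [h]
  nlinarith [sq_nonneg ((n:ℝ) - 2*k), sq_nonneg (((n:ℝ) - k) * k), sq_nonneg ((n:ℝ) - k)]

lemma Wt_base2 (n k : ℤ) : Wt k ≤ 2 * Wt n * Wt (n - k) := by
  unfold Wt
  have h : ((n - k : ℤ) : ℝ) = (n : ℝ) - k := by push_cast; ring
  rw [h]
  nlinarith [sq_nonneg ((k:ℝ) - 2*n), sq_nonneg (((n:ℝ) - k) * n), sq_nonneg ((n:ℝ) - k)]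

lemma Wt_rpow_pos (m : ℤ) (t : ℝ) : 0 < Wt m ^ t := Real.rpow_pos_of_pos (Wt_pos m) t

lemma key (u : ℝ) (hu : -(4⁻¹:ℝ) ≤ u) (n k : ℤ) :
    Wt n ^ u ≤ 2 ^ |u| * Wt k ^ u * Wt (n - k) ^ (u + 2⁻¹) := by
  have h2 : (0:ℝ) < 2 ^ |u| := Real.rpow_pos_of_pos two_pos _
  rcases le_or_gt 0 u with h0 | h0
  · rw [abs_of_nonneg h0]
    calc Wt n ^ u ≤ (2 * Wt k * Wt (n - k)) ^ u :=
          Real.rpow_le_rpow (Wt_pos n).le (Wt_base n k) h0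
      _ = 2 ^ u * Wt k ^ u * Wt (n - k) ^ u := by
          rw [Real.mul_rpow (by nlinarith [Wt_pos k]) (Wt_pos _).le,
            Real.mul_rpow (by norm_num) (Wt_pos _).le]
      _ ≤ 2 ^ u * Wt k ^ u * Wt (n - k) ^ (u + 2⁻¹) := by
          have h3 := Real.rpow_le_rpow_of_exponent_le (Wt_one_le (n-k)) (by linarith : u ≤ u + 2⁻¹)
          have h4 : (0:ℝ) ≤ 2 ^ u * Wt k ^ u := by
            have := Wt_rpow_pos k u; have := Real.rpow_pos_of_pos (two_pos (α := ℝ)) u; nlinarith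
          exact mul_le_mul_of_nonneg_left h3 h4
  · have ht : u = -(-u) := by ring
    have htpos : 0 < -u := by linarith
    have ht4 : -u ≤ 4⁻¹ := by linarith
    rw [abs_of_neg h0]
    have h1 : Wt k ^ (-u) ≤ 2 ^ (-u) * Wt n ^ (-u) * Wt (n - k) ^ (u + 2⁻¹) := by
      calc Wt k ^ (-u) ≤ (2 * Wt n * Wt (n - k)) ^ (-u) :=
            Real.rpow_le_rpow (Wt_pos k).le (Wt_base2 n k) htpos.le
        _ = 2 ^ (-u) * Wt n ^ (-u) * Wt (n - k) ^ (-u) := by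
            rw [Real.mul_rpow (by nlinarith [Wt_pos n]) (Wt_pos _).le,
              Real.mul_rpow (by norm_num) (Wt_pos _).le]
        _ ≤ 2 ^ (-u) * Wt n ^ (-u) * Wt (n - k) ^ (u + 2⁻¹) := by
            have := Real.rpow_le_rpow_of_exponent_le (Wt_one_le (n-k))
              (by linarith : -u ≤ u + 2⁻¹)
            have hpos : (0:ℝ) ≤ 2 ^ (-u) * Wt n ^ (-u) := by
              have := Wt_rpow_pos n (-u); have := Real.rpow_pos_of_pos two_pos (-u); nlinarith
            exact mul_le_mul_of_nonneg_left this hpos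
    have hn : Wt n ^ u = (Wt n ^ (-u))⁻¹ := by
      nth_rewrite 1 [ht]; rw [Real.rpow_neg (Wt_pos n).le]
    have hk : Wt k ^ u = (Wt k ^ (-u))⁻¹ := by
      nth_rewrite 1 [ht]; rw [Real.rpow_neg (Wt_pos k).le]
    rw [hn, hk]
    rw [inv_le_iff_one_le_mul₀ (Wt_rpow_pos n (-u))]
    have hkpos : (0:ℝ) < Wt k ^ (-u) := Wt_rpow_pos k (-u)
    have := mul_le_mul_of_nonneg_right h1 (le_of_lt (inv_pos.mpr hkpos))
    rw [mul_inv_cancel₀ (ne_of_gt hkpos)] at this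
    calc (1:ℝ) ≤ 2 ^ (-u) * Wt n ^ (-u) * Wt (n - k) ^ (u + 2⁻¹) * (Wt k ^ (-u))⁻¹ := this
      _ = 2 ^ (-u) * (Wt k ^ (-u))⁻¹ * Wt (n - k) ^ (u + 2⁻¹) * Wt n ^ (-u) := by ring

lemma rpow_sq (x : ℝ) (hx : 0 ≤ x) (t : ℝ) : (x ^ t) ^ 2 = x ^ (2 * t) := by
  rw [← Real.rpow_natCast (x ^ t) 2, ← Real.rpow_mul hx]
  norm_num [mul_comm]

lemma S0_summable : Summable (fun m : ℤ => (Wt m)⁻¹) := by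
  have hg : Summable (fun m : ℤ => 1 / (m:ℝ) ^ 2 + if m = 0 then (1:ℝ) else 0) := by
    refine ((Real.summable_one_div_int_pow (p := 2)).mpr one_lt_two).add ?_
    exact summable_of_ne_finset_zero (s := {0}) (by intro b hb; simp at hb ⊢; exact hb)
  refine Summable.of_nonneg_of_le (fun m => (inv_pos.mpr (Wt_pos m)).le) (fun m => ?_) hg
  rcases eq_or_ne m 0 with rfl | hm
  · simp [Wt]
  · have h1 : (0:ℝ) < (m:ℝ)^2 := by
      have : (m:ℝ) ≠ 0 := Int.cast_ne_zero.mpr hm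
      positivity
    have : (Wt m)⁻¹ ≤ ((m:ℝ)^2)⁻¹ := by
      apply inv_anti₀ h1
      unfold Wt; linarith
    simp only [one_div]
    have h2 : (0:ℝ) ≤ if m = 0 then (1:ℝ) else 0 := by positivity
    linarith

open MeasureTheory ENNReal in
lemma ecs (f g : ℤ → ℝ≥0∞) : (∑' k, f k * g k) ^ 2 ≤ (∑' k, f k ^ 2) * (∑' k, g k ^ 2) := by
  have h := ENNReal.lintegral_mul_le_Lp_mul_Lq (Measure.count (α := ℤ))
    (⟨by norm_num, by norm_num, by norm_num⟩ : Real.HolderConjugate 2 2)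
    (f := f) (g := g) (measurable_of_countable f).aemeasurable
    (measurable_of_countable g).aemeasurable
  simp only [lintegral_count, Pi.mul_apply] at h
  calc (∑' k, f k * g k) ^ 2
      ≤ ((∑' k, f k ^ (2:ℝ)) ^ (1/(2:ℝ)) * (∑' k, g k ^ (2:ℝ)) ^ (1/(2:ℝ))) ^ 2 := by
        exact pow_le_pow_left₀ (by positivity) h 2
    _ = (∑' k, f k ^ 2) * (∑' k, g k ^ 2) := by
        rw [mul_pow, ← ENNReal.rpow_natCast (_ ^ (1/(2:ℝ))) 2, ← ENNReal.rpow_natCast (_ ^ (1/(2:ℝ))) 2,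
          ← ENNReal.rpow_mul, ← ENNReal.rpow_mul]
        norm_num

noncomputable def aF (t : ℝ) (c : ℤ → ℂ) (k : ℤ) : ℝ := Wt k ^ t * ‖c k‖

open ENNReal in
lemma main (s : ℝ) (hs : -(2⁻¹:ℝ) ≤ s) (c d : ℤ → ℂ)
    (hc : memSob s c) (hd : memSob (s+2) d) :
    memSob s (fconv c d) ∧
      sobNorm s (fconv c d) ≤
        (2 ^ |s/2| * Real.sqrt (∑' m : ℤ, (Wt m)⁻¹)) * sobNorm s c * sobNorm (s+2) d := by
  set u := s/2 with hu_def
  have hu : -(4⁻¹:ℝ) ≤ u := by rw [hu_def]; linarith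
  have hc' : Summable (fun n : ℤ => Wt n ^ s * ‖c n‖ ^ 2) := hc
  have hd' : Summable (fun n : ℤ => Wt n ^ (s+2) * ‖d n‖ ^ 2) := hd
  have ha_def : ∀ k, aF u c k = Wt k ^ u * ‖c k‖ := fun k => rfl
  have hb_def : ∀ m, aF (u + 2⁻¹) d m = Wt m ^ (u + 2⁻¹) * ‖d m‖ := fun m => rfl
  set a := aF u c with ha_set
  set b := aF (u + 2⁻¹) d with hb_set
  have ha_nonneg : ∀ k, 0 ≤ a k := fun k => mul_nonneg (Wt_rpow_pos k u).le (norm_nonneg _)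
  have hb_nonneg : ∀ m, 0 ≤ b m := fun m => mul_nonneg (Wt_rpow_pos m _).le (norm_nonneg _)
  have ha_sq : ∀ k, a k ^ 2 = Wt k ^ s * ‖c k‖ ^ 2 := by
    intro k
    have h2 : 2*u = s := by rw [hu_def]; ring
    rw [ha_def k]
    simp only [mul_pow]
    rw [rpow_sq _ (Wt_pos k).le, h2]
  set A := sobNorm s c with hA_def
  set D := sobNorm (s+2) d with hD_def
  have hA_nonneg : 0 ≤ A := Real.sqrt_nonneg _
  have hD_nonneg : 0 ≤ D := Real.sqrt_nonneg _
  have hA2 : ∑' k, Wt k ^ s * ‖c k‖ ^ 2 = A ^ 2 := by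
    rw [hA_def, sobNorm, Real.sq_sqrt]
    · rfl
    · exact tsum_nonneg fun n => mul_nonneg (Wt_rpow_pos n s).le (by positivity)
  have hD2 : ∑' m, Wt m ^ (s+2) * ‖d m‖ ^ 2 = D ^ 2 := by
    rw [hD_def, sobNorm, Real.sq_sqrt]
    · rfl
    · exact tsum_nonneg fun n => mul_nonneg (Wt_rpow_pos n _).le (by positivity)
  -- splitting facts for b
  have hbsplit : ∀ m : ℤ, b m = Wt m ^ (-2⁻¹:ℝ) * (Wt m ^ ((s+2)/2) * ‖d m‖) := by
    intro m
    have he : (-2⁻¹ : ℝ) + (s+2)/2 = u + 2⁻¹ := by rw [hu_def]; ring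
    rw [hb_def m, ← mul_assoc, ← Real.rpow_add (Wt_pos m), he]
  have hx2 : ∀ m : ℤ, (Wt m ^ (-2⁻¹:ℝ)) ^ 2 = (Wt m)⁻¹ := by
    intro m
    rw [rpow_sq _ (Wt_pos m).le]
    norm_num [Real.rpow_neg_one]
  have hy2 : ∀ m : ℤ, (Wt m ^ ((s+2)/2) * ‖d m‖) ^ 2 = Wt m ^ (s+2) * ‖d m‖ ^ 2 := by
    intro m
    rw [mul_pow, rpow_sq _ (Wt_pos m).le]
    ring_nf
  -- b is summable
  have hbsum : Summable b := by
    have hgsum : Summable (fun m : ℤ => ((Wt m)⁻¹ + Wt m ^ (s+2) * ‖d m‖ ^ 2) / 2) :=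
      (S0_summable.add hd').div_const 2
    refine Summable.of_nonneg_of_le hb_nonneg (fun m => ?_) hgsum
    rw [hbsplit m]
    nlinarith [sq_nonneg (Wt m ^ (-2⁻¹:ℝ) - Wt m ^ ((s+2)/2) * ‖d m‖), hx2 m, hy2 m]
  -- a is bounded by A
  have haA : ∀ k, a k ≤ A := by
    intro k
    have h1 : a k ^ 2 ≤ ∑' j, Wt j ^ s * ‖c j‖ ^ 2 := by
      rw [ha_sq k]
      exact Summable.le_tsum hc' k fun j _ => mul_nonneg (Wt_rpow_pos j s).le (by positivity)
    calc a k = Real.sqrt (a k ^ 2) := (Real.sqrt_sq (ha_nonneg k)).symm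
      _ ≤ Real.sqrt (A ^ 2) := Real.sqrt_le_sqrt (by rw [← hA2]; exact h1)
      _ = A := Real.sqrt_sq hA_nonneg
  -- summability of fun k => a k * b (n - k)
  have habsum : ∀ n : ℤ, Summable (fun k => a k * b (n - k)) := by
    intro n
    have hbn : Summable (fun k : ℤ => b (n - k)) := by
      have h := ((Equiv.subLeft n).summable_iff (f := b)).mpr hbsum
      exact h.congr fun k => rfl
    refine Summable.of_nonneg_of_le (fun k => mul_nonneg (ha_nonneg k) (hb_nonneg _))
      (fun k => ?_) (hbn.mul_left A)
    exact mul_le_mul_of_nonneg_right (haA k) (hb_nonneg _)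
  -- key pointwise bound
  have hkey : ∀ n k : ℤ, Wt n ^ u * (‖c k‖ * ‖d (n - k)‖) ≤ 2 ^ |u| * (a k * b (n - k)) := by
    intro n k
    have h1 := key u hu n k
    have h2 : (0:ℝ) ≤ ‖c k‖ * ‖d (n - k)‖ := by positivity
    calc Wt n ^ u * (‖c k‖ * ‖d (n - k)‖)
        ≤ (2 ^ |u| * Wt k ^ u * Wt (n - k) ^ (u + 2⁻¹)) * (‖c k‖ * ‖d (n - k)‖) :=
          mul_le_mul_of_nonneg_right h1 h2
      _ = 2 ^ |u| * (a k * b (n - k)) := by rw [ha_def k, hb_def (n - k)]; ring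
  -- summability of the convolution terms
  have hconv_sum : ∀ n : ℤ, Summable (fun k => ‖c k‖ * ‖d (n - k)‖) := by
    intro n
    have h1 : Summable (fun k => Wt n ^ u * (‖c k‖ * ‖d (n - k)‖)) := by
      refine Summable.of_nonneg_of_le
        (fun k => mul_nonneg (Wt_rpow_pos n u).le (by positivity)) (fun k => hkey n k)
        ((habsum n).mul_left _)
    have h2 := h1.mul_left (Wt n ^ u)⁻¹
    refine h2.congr fun k => ?_
    rw [inv_mul_cancel_left₀ (ne_of_gt (Wt_rpow_pos n u))]
  -- norm of fconv
  have hnorm : ∀ n : ℤ, ‖fconv c d n‖ ≤ ∑' k, ‖c k‖ * ‖d (n - k)‖ := by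
    intro n
    have h1 : Summable (fun k => ‖c k * d (n - k)‖) := by
      simpa only [norm_mul] using hconv_sum n
    calc ‖fconv c d n‖ ≤ ∑' k, ‖c k * d (n - k)‖ := norm_tsum_le_tsum_norm h1
      _ = ∑' k, ‖c k‖ * ‖d (n - k)‖ := tsum_congr fun k => norm_mul _ _
  -- the real pointwise estimate
  have hreal : ∀ n : ℤ, Wt n ^ s * ‖fconv c d n‖ ^ 2 ≤
      (2 ^ |u| * ∑' k, a k * b (n - k)) ^ 2 := by
    intro n
    have hL : Wt n ^ s * ‖fconv c d n‖ ^ 2 = (Wt n ^ u * ‖fconv c d n‖) ^ 2 := by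
      have h2 : 2*u = s := by rw [hu_def]; ring
      rw [mul_pow, rpow_sq _ (Wt_pos n).le, h2]
    rw [hL]
    have h1 : Wt n ^ u * ‖fconv c d n‖ ≤ 2 ^ |u| * ∑' k, a k * b (n - k) := by
      calc Wt n ^ u * ‖fconv c d n‖
          ≤ Wt n ^ u * ∑' k, ‖c k‖ * ‖d (n - k)‖ :=
            mul_le_mul_of_nonneg_left (hnorm n) (Wt_rpow_pos n u).le
        _ = ∑' k, Wt n ^ u * (‖c k‖ * ‖d (n - k)‖) := tsum_mul_left.symm
        _ ≤ ∑' k, 2 ^ |u| * (a k * b (n - k)) :=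
            Summable.tsum_le_tsum (fun k => hkey n k) ((hconv_sum n).mul_left _) ((habsum n).mul_left _)
        _ = 2 ^ |u| * ∑' k, a k * b (n - k) := tsum_mul_left
    exact pow_le_pow_left₀ (mul_nonneg (Wt_rpow_pos n u).le (norm_nonneg _)) h1 2
  -- ENNReal phase
  have hterm_nonneg : ∀ n : ℤ, 0 ≤ Wt n ^ s * ‖fconv c d n‖ ^ 2 :=
    fun n => mul_nonneg (Wt_rpow_pos n s).le (by positivity)
  have hKnn : (0:ℝ) ≤ 2 ^ |u| := (Real.rpow_pos_of_pos two_pos _).le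
  have hbb : ∀ m : ℤ, (ENNReal.ofReal (b m) ^ (2⁻¹:ℝ)) ^ (2:ℕ) = ENNReal.ofReal (b m) := by
    intro m
    rw [← ENNReal.rpow_natCast (ENNReal.ofReal (b m) ^ (2⁻¹:ℝ)) 2, ← ENNReal.rpow_mul]
    norm_num
  have E1 : ∀ n : ℤ, ENNReal.ofReal (Wt n ^ s * ‖fconv c d n‖ ^ 2) ≤
      ENNReal.ofReal (2 ^ |u|) ^ 2 *
        (∑' k, ENNReal.ofReal (a k) * ENNReal.ofReal (b (n - k))) ^ 2 := by
    intro n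
    have htsnn : 0 ≤ ∑' k, a k * b (n - k) :=
      tsum_nonneg fun k => mul_nonneg (ha_nonneg k) (hb_nonneg _)
    calc ENNReal.ofReal (Wt n ^ s * ‖fconv c d n‖ ^ 2)
        ≤ ENNReal.ofReal ((2 ^ |u| * ∑' k, a k * b (n - k)) ^ 2) :=
          ENNReal.ofReal_le_ofReal (hreal n)
      _ = (ENNReal.ofReal (2 ^ |u|) * ENNReal.ofReal (∑' k, a k * b (n - k))) ^ 2 := by
          rw [ENNReal.ofReal_pow (mul_nonneg hKnn htsnn), ENNReal.ofReal_mul hKnn]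
      _ = (ENNReal.ofReal (2 ^ |u|) *
            ∑' k, ENNReal.ofReal (a k) * ENNReal.ofReal (b (n - k))) ^ 2 := by
          rw [ENNReal.ofReal_tsum_of_nonneg
            (fun k => mul_nonneg (ha_nonneg k) (hb_nonneg _)) (habsum n)]
          congr 1
          congr 1
          exact tsum_congr fun k => ENNReal.ofReal_mul (ha_nonneg k)
      _ = ENNReal.ofReal (2 ^ |u|) ^ 2 *
            (∑' k, ENNReal.ofReal (a k) * ENNReal.ofReal (b (n - k))) ^ 2 := mul_pow _ _ 2
  have E2 : ∀ n : ℤ, (∑' k, ENNReal.ofReal (a k) * ENNReal.ofReal (b (n - k))) ^ 2 ≤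
      (∑' m, ENNReal.ofReal (b m)) *
        ∑' k, ENNReal.ofReal (a k) ^ 2 * ENNReal.ofReal (b (n - k)) := by
    intro n
    have h := ecs (fun k => ENNReal.ofReal (a k) * ENNReal.ofReal (b (n - k)) ^ (2⁻¹:ℝ))
      (fun k => ENNReal.ofReal (b (n - k)) ^ (2⁻¹:ℝ))
    have hfg : ∀ k : ℤ, (ENNReal.ofReal (a k) * ENNReal.ofReal (b (n - k)) ^ (2⁻¹:ℝ)) *
        ENNReal.ofReal (b (n - k)) ^ (2⁻¹:ℝ) =
        ENNReal.ofReal (a k) * ENNReal.ofReal (b (n - k)) := by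
      intro k
      rw [mul_assoc, ← sq, hbb (n - k)]
    have hf2 : ∀ k : ℤ, (ENNReal.ofReal (a k) * ENNReal.ofReal (b (n - k)) ^ (2⁻¹:ℝ)) ^ (2:ℕ) =
        ENNReal.ofReal (a k) ^ 2 * ENNReal.ofReal (b (n - k)) := by
      intro k
      rw [mul_pow, hbb (n - k)]
    have hg2 : ∀ k : ℤ, (ENNReal.ofReal (b (n - k)) ^ (2⁻¹:ℝ)) ^ (2:ℕ) =
        ENNReal.ofReal (b (n - k)) := fun k => hbb (n - k)
    have hshift : ∑' k : ℤ, ENNReal.ofReal (b (n - k)) = ∑' m, ENNReal.ofReal (b m) := by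
      have h2 := (Equiv.subLeft n).tsum_eq (f := fun m => ENNReal.ofReal (b m))
      exact h2 ▸ tsum_congr fun k => rfl
    calc (∑' k, ENNReal.ofReal (a k) * ENNReal.ofReal (b (n - k))) ^ 2
        = (∑' k, (ENNReal.ofReal (a k) * ENNReal.ofReal (b (n - k)) ^ (2⁻¹:ℝ)) *
            ENNReal.ofReal (b (n - k)) ^ (2⁻¹:ℝ)) ^ 2 := by
          rw [tsum_congr hfg]
      _ ≤ (∑' k, (ENNReal.ofReal (a k) * ENNReal.ofReal (b (n - k)) ^ (2⁻¹:ℝ)) ^ 2) *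
            ∑' k, (ENNReal.ofReal (b (n - k)) ^ (2⁻¹:ℝ)) ^ 2 := h
      _ = (∑' k, ENNReal.ofReal (a k) ^ 2 * ENNReal.ofReal (b (n - k))) *
            ∑' k, ENNReal.ofReal (b (n - k)) := by
          rw [tsum_congr hf2, tsum_congr hg2]
      _ = (∑' m, ENNReal.ofReal (b m)) *
            ∑' k, ENNReal.ofReal (a k) ^ 2 * ENNReal.ofReal (b (n - k)) := by
          rw [hshift, mul_comm]
  have E3 : ∑' n : ℤ, ∑' k : ℤ, ENNReal.ofReal (a k) ^ 2 * ENNReal.ofReal (b (n - k)) =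
      (∑' k, ENNReal.ofReal (a k) ^ 2) * ∑' m, ENNReal.ofReal (b m) := by
    rw [ENNReal.tsum_comm]
    calc ∑' k : ℤ, ∑' n : ℤ, ENNReal.ofReal (a k) ^ 2 * ENNReal.ofReal (b (n - k))
        = ∑' k : ℤ, ENNReal.ofReal (a k) ^ 2 * ∑' n : ℤ, ENNReal.ofReal (b (n - k)) :=
          tsum_congr fun k => ENNReal.tsum_mul_left
      _ = ∑' k : ℤ, ENNReal.ofReal (a k) ^ 2 * ∑' m, ENNReal.ofReal (b m) := by
          refine tsum_congr fun k => ?_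
          congr 1
          have h2 := (Equiv.subRight k).tsum_eq (f := fun m => ENNReal.ofReal (b m))
          exact h2 ▸ tsum_congr fun n => rfl
      _ = (∑' k, ENNReal.ofReal (a k) ^ 2) * ∑' m, ENNReal.ofReal (b m) :=
          ENNReal.tsum_mul_right
  have hS0nn : (0:ℝ) ≤ ∑' m : ℤ, (Wt m)⁻¹ :=
    tsum_nonneg fun m => (inv_pos.mpr (Wt_pos m)).le
  have E4 : (∑' m, ENNReal.ofReal (b m)) ^ 2 ≤
      ENNReal.ofReal (∑' m : ℤ, (Wt m)⁻¹) * ENNReal.ofReal (D ^ 2) := by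
    have h := ecs (fun m => ENNReal.ofReal (Wt m ^ (-2⁻¹:ℝ)))
      (fun m => ENNReal.ofReal (Wt m ^ ((s+2)/2) * ‖d m‖))
    have hfg : ∀ m : ℤ, ENNReal.ofReal (Wt m ^ (-2⁻¹:ℝ)) *
        ENNReal.ofReal (Wt m ^ ((s+2)/2) * ‖d m‖) = ENNReal.ofReal (b m) := by
      intro m
      rw [← ENNReal.ofReal_mul (Wt_rpow_pos m _).le, ← hbsplit m]
    have hf2 : ∀ m : ℤ, ENNReal.ofReal (Wt m ^ (-2⁻¹:ℝ)) ^ (2:ℕ) =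
        ENNReal.ofReal (Wt m)⁻¹ := by
      intro m
      rw [← ENNReal.ofReal_pow (Wt_rpow_pos m _).le, hx2 m]
    have hg2 : ∀ m : ℤ, ENNReal.ofReal (Wt m ^ ((s+2)/2) * ‖d m‖) ^ (2:ℕ) =
        ENNReal.ofReal (Wt m ^ (s+2) * ‖d m‖ ^ 2) := by
      intro m
      rw [← ENNReal.ofReal_pow (mul_nonneg (Wt_rpow_pos m _).le (norm_nonneg _)), hy2 m]
    calc (∑' m, ENNReal.ofReal (b m)) ^ 2
        = (∑' m, ENNReal.ofReal (Wt m ^ (-2⁻¹:ℝ)) *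
            ENNReal.ofReal (Wt m ^ ((s+2)/2) * ‖d m‖)) ^ 2 := by rw [tsum_congr hfg]
      _ ≤ (∑' m, ENNReal.ofReal (Wt m ^ (-2⁻¹:ℝ)) ^ 2) *
            ∑' m, ENNReal.ofReal (Wt m ^ ((s+2)/2) * ‖d m‖) ^ 2 := h
      _ = (∑' m : ℤ, ENNReal.ofReal (Wt m)⁻¹) *
            ∑' m : ℤ, ENNReal.ofReal (Wt m ^ (s+2) * ‖d m‖ ^ 2) := by
          rw [tsum_congr hf2, tsum_congr hg2]
      _ = ENNReal.ofReal (∑' m : ℤ, (Wt m)⁻¹) * ENNReal.ofReal (D ^ 2) := by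
          rw [ENNReal.ofReal_tsum_of_nonneg (fun m => (inv_pos.mpr (Wt_pos m)).le) S0_summable]
          congr 1
          rw [← hD2, ENNReal.ofReal_tsum_of_nonneg
            (fun m => mul_nonneg (Wt_rpow_pos m _).le (by positivity)) hd']
  have EC : ∑' k, ENNReal.ofReal (a k) ^ 2 = ENNReal.ofReal (A ^ 2) := by
    have hcs : Summable (fun k : ℤ => a k ^ 2) := hc'.congr fun k => (ha_sq k).symm
    calc ∑' k, ENNReal.ofReal (a k) ^ 2
        = ∑' k, ENNReal.ofReal (a k ^ 2) :=
          tsum_congr fun k => (ENNReal.ofReal_pow (ha_nonneg k) 2).symm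
      _ = ENNReal.ofReal (∑' k, a k ^ 2) :=
          (ENNReal.ofReal_tsum_of_nonneg (fun k => sq_nonneg _) hcs).symm
      _ = ENNReal.ofReal (A ^ 2) := by
          rw [tsum_congr ha_sq, hA2]
  set R : ℝ := (2 ^ |u|) ^ 2 * (A ^ 2 * ((∑' m : ℤ, (Wt m)⁻¹) * D ^ 2)) with hR_def
  have hR_nonneg : 0 ≤ R := by
    have := sq_nonneg A
    have := sq_nonneg D
    have h2 : (0:ℝ) ≤ (2 ^ |u|) ^ 2 := sq_nonneg _
    rw [hR_def]
    nlinarith [mul_nonneg hS0nn (sq_nonneg D), mul_nonneg (sq_nonneg A) (mul_nonneg hS0nn (sq_nonneg D))]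
  have hchain : ∑' n : ℤ, ENNReal.ofReal (Wt n ^ s * ‖fconv c d n‖ ^ 2) ≤
      ENNReal.ofReal R := by
    calc ∑' n : ℤ, ENNReal.ofReal (Wt n ^ s * ‖fconv c d n‖ ^ 2)
        ≤ ∑' n : ℤ, ENNReal.ofReal (2 ^ |u|) ^ 2 *
            (∑' k, ENNReal.ofReal (a k) * ENNReal.ofReal (b (n - k))) ^ 2 :=
          ENNReal.tsum_le_tsum E1
      _ ≤ ∑' n : ℤ, ENNReal.ofReal (2 ^ |u|) ^ 2 *
            ((∑' m, ENNReal.ofReal (b m)) *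
              ∑' k, ENNReal.ofReal (a k) ^ 2 * ENNReal.ofReal (b (n - k))) :=
          ENNReal.tsum_le_tsum fun n => mul_le_mul_right (E2 n) _
      _ = ENNReal.ofReal (2 ^ |u|) ^ 2 * ((∑' m, ENNReal.ofReal (b m)) *
            ∑' n : ℤ, ∑' k, ENNReal.ofReal (a k) ^ 2 * ENNReal.ofReal (b (n - k))) := by
          rw [ENNReal.tsum_mul_left, ENNReal.tsum_mul_left]
      _ = ENNReal.ofReal (2 ^ |u|) ^ 2 * (ENNReal.ofReal (A ^ 2) *
            (∑' m, ENNReal.ofReal (b m)) ^ 2) := by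
          rw [E3, EC]
          ring
      _ ≤ ENNReal.ofReal (2 ^ |u|) ^ 2 * (ENNReal.ofReal (A ^ 2) *
            (ENNReal.ofReal (∑' m : ℤ, (Wt m)⁻¹) * ENNReal.ofReal (D ^ 2))) :=
          mul_le_mul_right (mul_le_mul_right E4 _) _
      _ = ENNReal.ofReal R := by
          rw [hR_def, ← ENNReal.ofReal_mul hS0nn, ← ENNReal.ofReal_mul (sq_nonneg A),
            ← ENNReal.ofReal_pow hKnn, ← ENNReal.ofReal_mul (sq_nonneg _)]
  -- summability of the target
  have hTsum : Summable (fun n : ℤ => Wt n ^ s * ‖fconv c d n‖ ^ 2) := by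
    have hne : (∑' n : ℤ, ENNReal.ofReal (Wt n ^ s * ‖fconv c d n‖ ^ 2)) ≠ ⊤ :=
      ne_top_of_le_ne_top ENNReal.ofReal_ne_top hchain
    have hgsum : Summable (fun n : ℤ => (Wt n ^ s * ‖fconv c d n‖ ^ 2).toNNReal) :=
      ENNReal.tsum_coe_ne_top_iff_summable.mp hne
    have := NNReal.summable_coe.mpr hgsum
    exact this.congr fun n => Real.coe_toNNReal _ (hterm_nonneg n)
  refine ⟨hTsum, ?_⟩
  have hle : ∑' n : ℤ, Wt n ^ s * ‖fconv c d n‖ ^ 2 ≤ R := by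
    refine (ENNReal.ofReal_le_ofReal_iff hR_nonneg).mp ?_
    rw [ENNReal.ofReal_tsum_of_nonneg hterm_nonneg hTsum]
    exact hchain
  have hsq : R = (2 ^ |u| * Real.sqrt (∑' m : ℤ, (Wt m)⁻¹) * A * D) ^ 2 := by
    rw [hR_def, mul_pow, mul_pow, mul_pow, Real.sq_sqrt hS0nn]
    ring
  have hfinal : sobNorm s (fconv c d) ≤ 2 ^ |u| * Real.sqrt (∑' m : ℤ, (Wt m)⁻¹) * A * D := by
    have h1 : sobNorm s (fconv c d) = Real.sqrt (∑' n : ℤ, Wt n ^ s * ‖fconv c d n‖ ^ 2) := rfl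
    rw [h1]
    calc Real.sqrt (∑' n : ℤ, Wt n ^ s * ‖fconv c d n‖ ^ 2)
        ≤ Real.sqrt R := Real.sqrt_le_sqrt hle
      _ = 2 ^ |u| * Real.sqrt (∑' m : ℤ, (Wt m)⁻¹) * A * D := by
          rw [hsq]
          exact Real.sqrt_sq (by positivity)
  calc sobNorm s (fconv c d) ≤ 2 ^ |u| * Real.sqrt (∑' m : ℤ, (Wt m)⁻¹) * A * D := hfinal
    _ = (2 ^ |u| * Real.sqrt (∑' m : ℤ, (Wt m)⁻¹)) * A * D := by ring

theorem stmt9 : ∀ r : ℝ, 1 / 2 ≤ r → ∃ C : ℝ, 0 < C ∧ ∀ c d : ℤ → ℂ,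
    memSob (r - 1) c → memSob (r + 1) d →
    memSob (r - 1) (fconv c d) ∧
      sobNorm (r - 1) (fconv c d) ≤ C * sobNorm (r - 1) c * sobNorm (r + 1) d := by
  intro r hr
  refine ⟨2 ^ |(r-1)/2| * (Real.sqrt (∑' m : ℤ, (Wt m)⁻¹) + 1), ?_, ?_⟩
  · have h1 : (0:ℝ) < 2 ^ |(r-1)/2| := Real.rpow_pos_of_pos two_pos _
    have h2 : (0:ℝ) < Real.sqrt (∑' m : ℤ, (Wt m)⁻¹) + 1 := by
      have := Real.sqrt_nonneg (∑' m : ℤ, (Wt m)⁻¹)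
      linarith
    exact mul_pos h1 h2
  · intro c d hc hd
    have hs : -(2⁻¹:ℝ) ≤ r - 1 := by linarith
    have hd' : memSob ((r-1)+2) d := by
      have he : (r-1)+2 = r+1 := by ring
      rw [he]
      exact hd
    obtain ⟨h1, h2⟩ := main (r-1) hs c d hc hd'
    refine ⟨h1, ?_⟩
    have he : (r-1)+2 = r+1 := by ring
    rw [he] at h2
    have hA : 0 ≤ sobNorm (r-1) c := Real.sqrt_nonneg _
    have hD : 0 ≤ sobNorm (r+1) d := Real.sqrt_nonneg _
    have hK : (0:ℝ) ≤ 2 ^ |(r-1)/2| := (Real.rpow_pos_of_pos two_pos _).le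
    have hS : Real.sqrt (∑' m : ℤ, (Wt m)⁻¹) ≤ Real.sqrt (∑' m : ℤ, (Wt m)⁻¹) + 1 := by
      linarith
    calc sobNorm (r-1) (fconv c d)
        ≤ (2 ^ |(r-1)/2| * Real.sqrt (∑' m : ℤ, (Wt m)⁻¹)) * sobNorm (r-1) c
            * sobNorm (r+1) d := h2
      _ ≤ (2 ^ |(r-1)/2| * (Real.sqrt (∑' m : ℤ, (Wt m)⁻¹) + 1)) * sobNorm (r-1) c
            * sobNorm (r+1) d := by
          have := mul_le_mul_of_nonneg_left hS hK
          have h3 := mul_le_mul_of_nonneg_right this hA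
          exact mul_le_mul_of_nonneg_right h3 hD
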